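/- arXiv:1903.02766 — 2 statements merged into one kernel-verified Lean document; each statement's English description precedes it below -/
import Mathlib

section
/- Let V be an algebraic set in 𝔻^n, let 1 ≤ k < n, and write points of ℂ^n = ℂ^k × ℂ^{n−k} as (z',z''). Let π_k : ℂ^n → ℂ^k denote the projection onto the first k coordinates. Suppose a = (a',a'') ∈ V is an isolated point of the fiber π_k^{-1}(a') ∩ V. Then there exist open polydiscs U' ⊆ ℂ^k centered at a' and U'' ⊆ ℂ^{n−k} centered at a'' with U = U' × U'' ⊆ 𝔻^n, such that the restriction π_k : U ∩ V → U' is a proper map, i.e. the preimage in U ∩ V of every compact subset of U' is compact. -/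
open Metric MvPolynomial

noncomputable section

/-- The open unit polydisc in ℂⁿ. -/
def polydisc (n : ℕ) : Set (Fin n → ℂ) := {z | ∀ i, ‖z i‖ < 1}

/-- The ideal of polynomials vanishing on a set `W ⊆ ℂⁿ`. -/
def vanishingIdeal' {n : ℕ} (W : Set (Fin n → ℂ)) : Ideal (MvPolynomial (Fin n) ℂ) where
  carrier := {p | ∀ z ∈ W, MvPolynomial.eval z p = 0}
  add_mem' := by
    intro a b ha hb z hz
    simp [ha z hz, hb z hz]
  zero_mem' := by intro z hz; simp
  smul_mem' := by
    intro c p hp z hz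
    simp [smul_eq_mul, hp z hz]

/-- `V` is an algebraic subset of the polydisc `𝔻ⁿ`. -/
def IsAlgebraicIn {n : ℕ} (V : Set (Fin n → ℂ)) : Prop :=
  ∃ s : Finset (MvPolynomial (Fin n) ℂ),
    V = polydisc n ∩ {z | ∀ p ∈ s, MvPolynomial.eval z p = 0}

/-- `V` is a one-dimensional algebraic subset of the polydisc `𝔻ⁿ`. -/
def IsOneDimAlgebraicIn {n : ℕ} (V : Set (Fin n → ℂ)) : Prop :=
  ∃ s : Finset (MvPolynomial (Fin n) ℂ),
    V = polydisc n ∩ {z | ∀ p ∈ s, MvPolynomial.eval z p = 0} ∧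
    ringKrullDim (MvPolynomial (Fin n) ℂ ⧸
      vanishingIdeal' {z : Fin n → ℂ | ∀ p ∈ s, MvPolynomial.eval z p = 0}) = 1

/-- `V ⊆ U` has the polynomial extension property with respect to `U`. -/
def HasPolyExtProp {n : ℕ} (U V : Set (Fin n → ℂ)) : Prop :=
  ∀ p : MvPolynomial (Fin n) ℂ,
    ∃ F : (Fin n → ℂ) → ℂ,
      DifferentiableOn ℂ F U ∧
      (∃ C : ℝ, ∀ z ∈ U, ‖F z‖ ≤ C) ∧
      (∀ z ∈ V, F z = MvPolynomial.eval z p) ∧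
      sSup ((fun z => ‖F z‖) '' U) =
        sSup ((fun z => ‖MvPolynomial.eval z p‖) '' V)

/-- `V` is a holomorphic retract of the polydisc `𝔻ⁿ`. -/
def IsHolRetract {n : ℕ} (V : Set (Fin n → ℂ)) : Prop :=
  ∃ r : (Fin n → ℂ) → (Fin n → ℂ),
    DifferentiableOn ℂ r (polydisc n) ∧
    (∀ z ∈ polydisc n, r z ∈ V) ∧
    (∀ z ∈ V, r z = z)

/-- The Möbius (pseudohyperbolic) distance on the unit disc. -/
def mDist (z w : ℂ) : ℝ := ‖(z - w) / (1 - z * (starRingEnd ℂ) w)‖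

/-- A compact-type set `K ⊆ ℂⁿ` is polynomially convex. -/
def PolyConvex {n : ℕ} (K : Set (Fin n → ℂ)) : Prop :=
  K = {z | ∀ p : MvPolynomial (Fin n) ℂ,
        ‖MvPolynomial.eval z p‖ ≤
          sSup ((fun w => ‖MvPolynomial.eval w p‖) '' K)}

/-- `h` is a Möbius automorphism of the unit disc. -/
def IsDiscAut (h : ℂ → ℂ) : Prop :=
  ∃ ω a : ℂ, ‖ω‖ = 1 ∧ ‖a‖ < 1 ∧
    ∀ z : ℂ, h z = ω * ((z - a) / (1 - (starRingEnd ℂ) a * z))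

/-- `w` is a regular point of `V`. -/
def IsRegularPoint {n : ℕ} (V : Set (Fin n → ℂ)) (w : Fin n → ℂ) : Prop :=
  ∃ (Ω : Set (Fin n → ℂ)) (δ : ℝ) (φ : ℂ → Fin n → ℂ),
    IsOpen Ω ∧ w ∈ Ω ∧ 0 < δ ∧
    DifferentiableOn ℂ φ (ball 0 δ) ∧
    Set.InjOn φ (ball 0 δ) ∧
    (∀ l ∈ ball (0:ℂ) δ, deriv φ l ≠ 0) ∧
    φ 0 = w ∧
    V ∩ Ω = (φ '' ball 0 δ) ∩ Ω

/-- The open Euclidean ball of radius `t` centered at the origin of `ℂⁿ`. -/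
def euclBall (n : ℕ) (t : ℝ) : Set (Fin n → ℂ) :=
  {z | ∑ i, ‖z i‖ ^ 2 < t ^ 2}

/-- If `a ∈ V` is isolated in the fiber `π_k⁻¹(a') ∩ V` of the projection onto the first `k`
coordinates, then there is a polydisc `U = U' × U''` centered at `a`, contained in `𝔻ⁿ`,
such that `π_k : U ∩ V → U'` is proper. -/
theorem stmt_4 (n k : ℕ) (hk1 : 1 ≤ k) (hkn : k < n)
    (V : Set (Fin n → ℂ)) (halg : IsAlgebraicIn V)
    (a : Fin n → ℂ) (ha : a ∈ V)
    (hiso : ∃ Ω : Set (Fin n → ℂ), IsOpen Ω ∧ a ∈ Ω ∧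
      {z ∈ V | ∀ i : Fin k, z (Fin.castLE hkn.le i) = a (Fin.castLE hkn.le i)} ∩ Ω = {a}) :
    ∃ r : Fin n → ℝ, (∀ i, 0 < r i) ∧
      {z : Fin n → ℂ | ∀ i, ‖z i - a i‖ < r i} ⊆ polydisc n ∧
      ∀ K : Set (Fin k → ℂ), IsCompact K →
        K ⊆ {z' : Fin k → ℂ | ∀ i : Fin k,
              ‖z' i - a (Fin.castLE hkn.le i)‖ < r (Fin.castLE hkn.le i)} →
        IsCompact {z ∈ {z : Fin n → ℂ | ∀ i, ‖z i - a i‖ < r i} ∩ V |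
          (fun i : Fin k => z (Fin.castLE hkn.le i)) ∈ K} := by
  classical
  obtain ⟨s, hV⟩ := halg
  set Z : Set (Fin n → ℂ) := {z | ∀ p ∈ s, MvPolynomial.eval z p = 0} with hZdef
  have hZclosed : IsClosed Z := by
    have hEq : Z = ⋂ p ∈ s, {z : Fin n → ℂ | MvPolynomial.eval z p = 0} := by
      ext z; simp [hZdef]
    rw [hEq]
    exact isClosed_biInter fun p _ =>
      isClosed_eq (MvPolynomial.continuous_eval p) continuous_const
  have hpoly_open : IsOpen (polydisc n) := by
    have hEq : polydisc n = ⋂ i, {z : Fin n → ℂ | ‖z i‖ < 1} := by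
      ext z; simp [polydisc]
    rw [hEq]
    exact isOpen_iInter_of_finite fun i =>
      isOpen_lt (continuous_norm.comp (continuous_apply i)) continuous_const
  obtain ⟨Ω, hΩopen, haΩ, hfib⟩ := hiso
  have hapd : a ∈ polydisc n := (hV ▸ ha).1
  obtain ⟨ρ', hρ', hball⟩ := Metric.isOpen_iff.mp (hΩopen.inter hpoly_open) a ⟨haΩ, hapd⟩
  set ρ : ℝ := ρ' / 2 with hρdef
  have hρpos : 0 < ρ := by positivity
  have hcb : Metric.closedBall a ρ ⊆ Ω ∩ polydisc n := fun z hz =>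
    hball (Metric.mem_ball.mpr (lt_of_le_of_lt (Metric.mem_closedBall.mp hz)
      (by rw [hρdef]; linarith)))
  -- the shell in the fiber direction
  set S : Set (Fin n → ℂ) :=
    {z | (∀ i : Fin k, z (Fin.castLE hkn.le i) = a (Fin.castLE hkn.le i)) ∧
      (∀ j, dist (z j) (a j) ≤ ρ) ∧
      (∃ j : Fin n, k ≤ (j : ℕ) ∧ ρ / 2 ≤ dist (z j) (a j))} with hSdef
  have hSsubcb : S ⊆ Metric.closedBall a ρ := fun z hz => by
    rw [Metric.mem_closedBall]
    exact (dist_pi_le_iff hρpos.le).mpr hz.2.1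
  have hSclosed : IsClosed S := by
    have h1 : IsClosed {z : Fin n → ℂ |
        ∀ i : Fin k, z (Fin.castLE hkn.le i) = a (Fin.castLE hkn.le i)} := by
      have hEq : {z : Fin n → ℂ |
          ∀ i : Fin k, z (Fin.castLE hkn.le i) = a (Fin.castLE hkn.le i)} =
          ⋂ i : Fin k, {z : Fin n → ℂ | z (Fin.castLE hkn.le i) = a (Fin.castLE hkn.le i)} := by
        ext z; simp
      rw [hEq]
      exact isClosed_iInter fun i => isClosed_eq (continuous_apply _) continuous_const
    have h2 : IsClosed {z : Fin n → ℂ | ∀ j, dist (z j) (a j) ≤ ρ} := by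
      have hEq : {z : Fin n → ℂ | ∀ j, dist (z j) (a j) ≤ ρ} =
          ⋂ j, {z : Fin n → ℂ | dist (z j) (a j) ≤ ρ} := by ext z; simp
      rw [hEq]
      exact isClosed_iInter fun j =>
        isClosed_le ((continuous_apply j).dist continuous_const) continuous_const
    have h3 : IsClosed {z : Fin n → ℂ |
        ∃ j : Fin n, k ≤ (j : ℕ) ∧ ρ / 2 ≤ dist (z j) (a j)} := by
      have hEq : {z : Fin n → ℂ | ∃ j : Fin n, k ≤ (j : ℕ) ∧ ρ / 2 ≤ dist (z j) (a j)} =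
          ⋃ j ∈ {j : Fin n | k ≤ (j : ℕ)},
            {z : Fin n → ℂ | ρ / 2 ≤ dist (z j) (a j)} := by
        ext z; simp
      rw [hEq]
      exact (Set.toFinite _).isClosed_biUnion fun j _ =>
        isClosed_le continuous_const ((continuous_apply j).dist continuous_const)
    have hEq : S = _ ∩ ({z : Fin n → ℂ | ∀ j, dist (z j) (a j) ≤ ρ} ∩ _) := rfl
    rw [hEq]
    exact h1.inter (h2.inter h3)
  have hScompact : IsCompact S :=
    Metric.isCompact_of_isClosed_isBounded hSclosed
      ((Metric.isBounded_closedBall).subset hSsubcb)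
  have hSZ : S ⊆ Zᶜ := by
    intro z hz hzZ
    have hzcb := hSsubcb hz
    have hzV : z ∈ V := hV ▸ ⟨(hcb hzcb).2, hzZ⟩
    have hza : z ∈ ({a} : Set (Fin n → ℂ)) := hfib ▸ ⟨⟨hzV, hz.1⟩, (hcb hzcb).1⟩
    obtain ⟨j, hjk, hjd⟩ := hz.2.2
    rw [Set.mem_singleton_iff] at hza
    rw [hza, dist_self] at hjd
    linarith
  obtain ⟨ε, hεpos, hthick⟩ :=
    hScompact.exists_thickening_subset_open hZclosed.isOpen_compl hSZ
  set ε' : ℝ := min ε ρ / 2 with hε'def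
  have hε'pos : 0 < ε' := by positivity
  have hε'ρ : ε' ≤ ρ / 2 := by
    rw [hε'def]; have := min_le_right ε ρ; linarith
  have hε'ε : ε' < ε := by
    rw [hε'def]; have := min_le_left ε ρ; linarith
  refine ⟨fun i => if (i : ℕ) < k then ε' else ρ / 2, fun i => ?_, ?_, ?_⟩
  · dsimp only; split <;> positivity
  · intro z hz
    have hzcb : z ∈ Metric.closedBall a ρ := by
      rw [Metric.mem_closedBall]
      refine (dist_pi_le_iff hρpos.le).mpr fun i => ?_
      have := hz i
      rw [Complex.dist_eq]
      dsimp only at this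
      split at this <;> linarith
    exact (hcb hzcb).2
  · intro K hK hKsub
    set r : Fin n → ℝ := fun i => if (i : ℕ) < k then ε' else ρ / 2 with hrdef
    set Q : Set (Fin n → ℂ) :=
      {z | (fun i : Fin k => z (Fin.castLE hkn.le i)) ∈ K} ∩ Z ∩
        {z : Fin n → ℂ | ∀ j, dist (z j) (a j) ≤ r j} with hQdef
    have hr_le_ρ : ∀ j : Fin n, r j ≤ ρ := by
      intro j; rw [hrdef]; dsimp only; split <;> linarith
    have hQcb : Q ⊆ Metric.closedBall a ρ := by
      intro z hz
      rw [Metric.mem_closedBall]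
      exact (dist_pi_le_iff hρpos.le).mpr fun j => le_trans (hz.2 j) (hr_le_ρ j)
    have hπcont : Continuous fun (z : Fin n → ℂ) (i : Fin k) => z (Fin.castLE hkn.le i) :=
      continuous_pi fun i => continuous_apply _
    have hQclosed : IsClosed Q := by
      refine IsClosed.inter (IsClosed.inter ?_ hZclosed) ?_
      · exact hK.isClosed.preimage hπcont
      · have hEq : {z : Fin n → ℂ | ∀ j, dist (z j) (a j) ≤ r j} =
            ⋂ j, {z : Fin n → ℂ | dist (z j) (a j) ≤ r j} := by ext z; simp
        rw [hEq]
        exact isClosed_iInter fun j =>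
          isClosed_le ((continuous_apply j).dist continuous_const) continuous_const
    have hQcompact : IsCompact Q :=
      Metric.isCompact_of_isClosed_isBounded hQclosed
        ((Metric.isBounded_closedBall).subset hQcb)
    have hEq : {z ∈ {z : Fin n → ℂ | ∀ i, ‖z i - a i‖ < r i} ∩ V |
        (fun i : Fin k => z (Fin.castLE hkn.le i)) ∈ K} = Q := by
      ext z
      constructor
      · rintro ⟨⟨hzU, hzV⟩, hzK⟩
        refine ⟨⟨hzK, (hV ▸ hzV).2⟩, fun j => ?_⟩
        rw [Complex.dist_eq]
        exact (hzU j).le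
      · rintro ⟨⟨hzK, hzZ⟩, hzle⟩
        have hzcb : z ∈ Metric.closedBall a ρ := by
          rw [Metric.mem_closedBall]
          exact (dist_pi_le_iff hρpos.le).mpr fun j => le_trans (hzle j) (hr_le_ρ j)
        have hzV : z ∈ V := hV ▸ ⟨(hcb hzcb).2, hzZ⟩
        refine ⟨⟨fun i => ?_, hzV⟩, hzK⟩
        by_cases hik : (i : ℕ) < k
        · have hi : Fin.castLE hkn.le ⟨(i : ℕ), hik⟩ = i := by
            apply Fin.ext; simp
          have := hKsub hzK ⟨(i : ℕ), hik⟩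
          simpa [hi] using this
        · -- second coordinates: strictness via the thickening of the shell
          have hle : dist (z i) (a i) ≤ ρ / 2 := by
            have := hzle i
            rw [hrdef] at this
            simpa [hik] using this
          rcases lt_or_ge (dist (z i) (a i)) (ρ / 2) with hlt | hge
          · rw [Complex.dist_eq] at hlt
            simpa [hrdef, hik] using hlt
          · exfalso
            set w : Fin n → ℂ := fun j => if (j : ℕ) < k then a j else z j with hwdef
            have hwS : w ∈ S := by
              refine ⟨fun i0 => ?_, fun j => ?_, ⟨i, not_lt.mp hik, ?_⟩⟩
              · have : ((Fin.castLE hkn.le i0 : Fin n) : ℕ) < k := by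
                  simpa using i0.isLt
                simp [hwdef, this]
              · rw [hwdef]; dsimp only; split
                · simp [hρpos.le]
                · exact le_trans (hzle j) (hr_le_ρ j)
              · rw [hwdef]; dsimp only
                rw [if_neg hik]
                exact hge
            have hzw : dist z w ≤ ε' := by
              refine (dist_pi_le_iff hε'pos.le).mpr fun j => ?_
              rw [hwdef]; dsimp only; split
              · rename_i hjk
                have := hzle j
                rw [hrdef] at this
                simpa [hjk] using this
              · simp [hε'pos.le]
            have hzth : z ∈ Metric.thickening ε S :=
              Metric.mem_thickening_iff.mpr ⟨w, hwS, lt_of_le_of_lt hzw hε'ε⟩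
            exact (hthick hzth) hzZ
    rw [hEq]
    exact hQcompact
end
end

section
/- Let n ≥ 3 and let V be a nonempty one-dimensional algebraic subset of 𝔻^n with the H^∞-extension property, i.e. every bounded holomorphic function f : V → ℂ extends to a bounded holomorphic function F : 𝔻^n → ℂ with F = f on V and sup_{𝔻^n} |F| = sup_V |f|. Then V is connected. -/
open Metric MvPolynomial

noncomputable section

/-- A function `f` on `V ⊆ ℂⁿ` is holomorphic on `V` if near each point of `V` it extends to
a holomorphic function of a neighborhood. -/
def HolomorphicOnSet {n : ℕ} (V : Set (Fin n → ℂ)) (f : (Fin n → ℂ) → ℂ) : Prop :=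
  ∀ ζ ∈ V, ∃ U : Set (Fin n → ℂ), IsOpen U ∧ ζ ∈ U ∧
    ∃ G : (Fin n → ℂ) → ℂ, DifferentiableOn ℂ G U ∧ ∀ z ∈ U ∩ V, G z = f z

lemma polydisc_open (n : ℕ) : IsOpen (polydisc n) := by
  have : polydisc n = ⋂ i, (fun z : Fin n → ℂ => z i) ⁻¹' (ball 0 1) := by
    ext z; simp [polydisc, mem_ball, dist_eq_norm]
  rw [this]
  exact isOpen_iInter_of_finite fun i => (isOpen_ball).preimage (continuous_apply i)

lemma polydisc_convex (n : ℕ) : Convex ℝ (polydisc n) := by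
  intro z hz w hw a b ha hb hab
  intro i
  have h1 : ‖(a • z + b • w) i‖ ≤ a * ‖z i‖ + b * ‖w i‖ := by
    calc ‖(a • z + b • w) i‖ ≤ ‖a • z i‖ + ‖b • w i‖ := by
          simpa using norm_add_le (a • z i) (b • w i)
      _ = a * ‖z i‖ + b * ‖w i‖ := by
          rw [norm_smul, norm_smul]
          simp [abs_of_nonneg ha, abs_of_nonneg hb]
  have h2 : a * ‖z i‖ + b * ‖w i‖ < 1 := by
    rcases ha.lt_or_eq with h | h
    · rcases hb.lt_or_eq with h' | h'
      · have := hz i; have := hw i; nlinarith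
      · have := hz i; rw [← h'] at hab ⊢; simpa using by nlinarith
    · have := hw i; rw [← h] at hab ⊢; simpa using by nlinarith
  exact lt_of_le_of_lt h1 h2

/-- A nonempty one-dimensional algebraic subset of `𝔻ⁿ` (`n ≥ 3`) with the
`H^∞`-extension property is connected. -/
theorem stmt_14 (n : ℕ) (hn : 3 ≤ n) (V : Set (Fin n → ℂ)) (hne : V.Nonempty)
    (halg : IsOneDimAlgebraicIn V)
    (hext : ∀ f : (Fin n → ℂ) → ℂ, HolomorphicOnSet V f →
      (∃ C : ℝ, ∀ z ∈ V, ‖f z‖ ≤ C) →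
      ∃ F : (Fin n → ℂ) → ℂ, DifferentiableOn ℂ F (polydisc n) ∧
        (∃ C : ℝ, ∀ z ∈ polydisc n, ‖F z‖ ≤ C) ∧
        (∀ z ∈ V, F z = f z) ∧
        sSup ((fun z => ‖F z‖) '' polydisc n) =
          sSup ((fun z => ‖f z‖) '' V)) :
    IsConnected V := by
  classical
  refine ⟨hne, ?_⟩
  by_contra hdisc
  rw [IsPreconnected] at hdisc
  push_neg at hdisc
  obtain ⟨u, v, hu, hv, hVuv, ⟨a, haV, hau⟩, ⟨b, hbV, hbv⟩, hemp⟩ := hdisc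
  have hempty : V ∩ (u ∩ v) = ∅ := hemp
  -- V is contained in the polydisc
  obtain ⟨s, hVeq, -⟩ := halg
  have hVsub : V ⊆ polydisc n := by rw [hVeq]; exact Set.inter_subset_left
  -- the indicator function
  set f : (Fin n → ℂ) → ℂ := fun z => if z ∈ u then 0 else 1 with hf
  have hbu : b ∉ u := by
    intro hbu
    have : b ∈ V ∩ (u ∩ v) := ⟨hbV, hbu, hbv⟩
    rw [hempty] at this; exact this
  have hfa : f a = 0 := by simp [hf, hau]
  have hfb : f b = 1 := by simp [hf, hbu]
  have hfval : ∀ z ∈ V, ‖f z‖ ≤ 1 := by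
    intro z hz
    by_cases h : z ∈ u <;> simp [hf, h]
  have hhol : HolomorphicOnSet V f := by
    intro ζ hζ
    by_cases hζu : ζ ∈ u
    · refine ⟨u, hu, hζu, fun _ => 0, differentiableOn_const 0, ?_⟩
      rintro z ⟨hzu, -⟩
      simp [hf, hzu]
    · have hζv : ζ ∈ v := (hVuv hζ).resolve_left hζu
      refine ⟨v, hv, hζv, fun _ => 1, differentiableOn_const 1, ?_⟩
      rintro z ⟨hzv, hzV⟩
      have hzu : z ∉ u := by
        intro hzu
        have : z ∈ V ∩ (u ∩ v) := ⟨hzV, hzu, hzv⟩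
        rw [hempty] at this; exact this
      simp [hf, hzu]
  obtain ⟨F, hFdiff, ⟨C, hC⟩, hFV, hsup⟩ := hext f hhol ⟨1, hfval⟩
  -- sSup of |f| on V equals 1
  have hsupf : sSup ((fun z => ‖f z‖) '' V) = 1 := by
    apply le_antisymm
    · refine csSup_le ⟨‖f b‖, ⟨b, hbV, rfl⟩⟩ ?_
      rintro x ⟨z, hzV, rfl⟩
      exact hfval z hzV
    · have hbdd : BddAbove ((fun z => ‖f z‖) '' V) := by
        refine ⟨1, ?_⟩
        rintro x ⟨z, hzV, rfl⟩; exact hfval z hzV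
      exact le_csSup hbdd ⟨b, hbV, by simp [hfb]⟩
  have hbddF : BddAbove ((fun z => ‖F z‖) '' polydisc n) := by
    refine ⟨C, ?_⟩
    rintro x ⟨z, hz, rfl⟩
    exact hC z hz
  have hle : ∀ z ∈ polydisc n, ‖F z‖ ≤ 1 := by
    intro z hz
    calc ‖F z‖ ≤ sSup ((fun z => ‖F z‖) '' polydisc n) :=
          le_csSup hbddF ⟨z, hz, rfl⟩
      _ = 1 := by rw [hsup, hsupf]
  have hFb : F b = 1 := by rw [hFV b hbV, hfb]
  have hbP : b ∈ polydisc n := hVsub hbV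
  have hmax : IsMaxOn (norm ∘ F) (polydisc n) b := by
    intro z hz
    simp only [Function.comp_apply, hFb, norm_one]
    exact hle z hz
  have heq := Complex.eqOn_of_isPreconnected_of_isMaxOn_norm
    (polydisc_convex n).isPreconnected (polydisc_open n) hFdiff hbP hmax
  have haP : a ∈ polydisc n := hVsub haV
  have h0 : F a = F b := heq haP
  rw [hFV a haV, hfa, hFb] at h0
  exact zero_ne_one h0
end
end
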